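/- Let V be a normed vector space over ℂ, A : V → V a linear map, c > 0, N a nonnegative integer, and T ∈ V such that (A + c·I)^{N+1} T = 0 and ‖A^k T‖ ≤ M·c^k for all integers k ≥ 0 and some M > 0. Then (A + c·I) T = 0. -/

import Mathlib

/-- Key lemma: if `(A + c)^2 g = 0` and the iterates `A^k g` grow at most like `c^k`,
then `(A + c) g = 0`. -/
lemma key_lemma {V : Type*} [NormedAddCommGroup V] [NormedSpace ℂ V]
    (A : Module.End ℂ V) (c : ℝ) (hc : 0 < c) (g : V) (M' : ℝ)
    (hb : ∀ k : ℕ, ‖(A ^ k) g‖ ≤ M' * c ^ k)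
    (h2 : ((A + (c : ℂ) • (1 : Module.End ℂ V)) ^ 2) g = 0) :
    (A + (c : ℂ) • (1 : Module.End ℂ V)) g = 0 := by
  set B := A + (c : ℂ) • (1 : Module.End ℂ V) with hB
  set h := B g with hh
  have hBh : B h = 0 := by
    have : (B ^ 2) g = B (B g) := by rw [pow_two]; rfl
    rw [hh, ← this, h2]
  have hAh : A h = (-(c : ℂ)) • h := by
    have : A h + (c : ℂ) • h = 0 := by
      have := hBh
      simpa [hB, LinearMap.add_apply, LinearMap.smul_apply] using this
    linear_combination (norm := module) this
  have hAg : A g = h - (c : ℂ) • g := by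
    have : h = A g + (c : ℂ) • g := by
      simp [hh, hB, LinearMap.add_apply, LinearMap.smul_apply]
    rw [this]; abel
  have main : ∀ n : ℕ, (A ^ n) g
      = ((-(c : ℂ)) ^ n) • g + ((n : ℂ) * (-(c : ℂ)) ^ (n - 1)) • h := by
    intro n
    induction n with
    | zero => simp
    | succ n ih =>
      have hstep : (A ^ (n + 1)) g = A ((A ^ n) g) := by
        rw [pow_succ']; rfl
      rw [hstep, ih]
      rw [map_add, map_smul, map_smul, hAg, hAh]
      have hcoef : ((n : ℂ) * (-(c : ℂ)) ^ (n - 1)) * (-(c : ℂ)) = (n : ℂ) * (-(c : ℂ)) ^ n := by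
        cases n with
        | zero => simp
        | succ m => simp only [Nat.add_sub_cancel]; push_cast; rw [pow_succ]; ring
      simp only [Nat.add_sub_cancel]
      rw [smul_smul, hcoef]
      have hp : (-(c : ℂ)) ^ (n + 1) = (-(c : ℂ)) ^ n * (-(c : ℂ)) := pow_succ _ _
      rw [hp]
      push_cast
      module
  -- derive the norm bound on h
  have hbound : ∀ n : ℕ, (n : ℝ) * ‖h‖ ≤ c * (M' + ‖g‖) := by
    intro n
    have heq : ((n : ℂ) * (-(c : ℂ)) ^ (n - 1)) • h
        = (A ^ n) g - ((-(c : ℂ)) ^ n) • g := by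
      rw [main n]; abel
    have hnorm1 : ‖((n : ℂ) * (-(c : ℂ)) ^ (n - 1)) • h‖ = (n : ℝ) * c ^ (n - 1) * ‖h‖ := by
      rw [norm_smul, norm_mul, norm_pow]
      simp [abs_of_pos hc]
    have hnorm2 : ‖(A ^ n) g - ((-(c : ℂ)) ^ n) • g‖ ≤ M' * c ^ n + c ^ n * ‖g‖ := by
      refine (norm_sub_le _ _).trans ?_
      gcongr
      · exact hb n
      · rw [norm_smul, norm_pow]
        simp [abs_of_pos hc]
    have h1 : (n : ℝ) * c ^ (n - 1) * ‖h‖ ≤ c ^ n * (M' + ‖g‖) := by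
      rw [← heq] at hnorm2
      rw [hnorm1] at hnorm2
      calc (n : ℝ) * c ^ (n - 1) * ‖h‖ ≤ M' * c ^ n + c ^ n * ‖g‖ := hnorm2
        _ = c ^ n * (M' + ‖g‖) := by ring
    cases n with
    | zero =>
      have h0 := hb 0
      simp only [pow_zero, mul_one] at h0
      have hM' : (0:ℝ) ≤ M' := le_trans (norm_nonneg _) h0
      have hg0 : (0:ℝ) ≤ ‖g‖ := norm_nonneg _
      simp only [Nat.cast_zero, zero_mul]
      nlinarith
    | succ m =>
      have hcpow : (0:ℝ) < c ^ m := pow_pos hc m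
      have : c ^ (m + 1) = c ^ m * c := pow_succ c m
      rw [this] at h1
      have h1' : ((m+1 : ℕ) : ℝ) * c ^ m * ‖h‖ ≤ c ^ m * (c * (M' + ‖g‖)) := by
        have : ((m+1 : ℕ) : ℝ) * c ^ (m + 1 - 1) * ‖h‖ = ((m+1 : ℕ) : ℝ) * c ^ m * ‖h‖ := by
          norm_num
        rw [this] at h1
        calc ((m+1 : ℕ) : ℝ) * c ^ m * ‖h‖ ≤ c ^ m * c * (M' + ‖g‖) := h1
          _ = c ^ m * (c * (M' + ‖g‖)) := by ring
      have := (mul_le_mul_iff_right₀ hcpow).mp (by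
        calc c ^ m * (((m+1 : ℕ) : ℝ) * ‖h‖) = ((m+1 : ℕ) : ℝ) * c ^ m * ‖h‖ := by ring
          _ ≤ c ^ m * (c * (M' + ‖g‖)) := h1')
      exact this
  -- conclude h = 0
  by_contra hne
  have hpos : 0 < ‖h‖ := by
    rcases (norm_pos_iff).mpr hne with h'
    exact h'
  obtain ⟨n, hn⟩ := exists_nat_gt (c * (M' + ‖g‖) / ‖h‖)
  have := hbound n
  have h2' : (n : ℝ) ≤ c * (M' + ‖g‖) / ‖h‖ := by
    rw [le_div_iff₀ hpos]
    linarith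
  linarith

theorem stmt_7 {V : Type*} [NormedAddCommGroup V] [NormedSpace ℂ V]
    (A : Module.End ℂ V) (c : ℝ) (hc : 0 < c) (N : ℕ) (T : V)
    (hT : ((A + (c : ℂ) • (1 : Module.End ℂ V)) ^ (N + 1)) T = 0)
    (hM : ∃ M > 0, ∀ k : ℕ, ‖(A ^ k) T‖ ≤ M * c ^ k) :
    (A + (c : ℂ) • (1 : Module.End ℂ V)) T = 0 := by
  obtain ⟨M, hMpos, hMb⟩ := hM
  set B := A + (c : ℂ) • (1 : Module.End ℂ V) with hB
  -- growth bound for B^j T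
  have hgrow : ∀ j k : ℕ, ‖(A ^ k) ((B ^ j) T)‖ ≤ (M * (2 * c) ^ j) * c ^ k := by
    intro j
    induction j with
    | zero => intro k; simpa using hMb k
    | succ j ih =>
      intro k
      have hstep : (B ^ (j + 1)) T = B ((B ^ j) T) := by rw [pow_succ']; rfl
      have hBapp : B ((B ^ j) T) = A ((B ^ j) T) + (c : ℂ) • ((B ^ j) T) := by
        simp [hB, LinearMap.add_apply, LinearMap.smul_apply]
      have hAk : (A ^ k) (A ((B ^ j) T)) = (A ^ (k+1)) ((B ^ j) T) := by
        rw [pow_succ]; rfl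
      rw [hstep, hBapp, map_add, map_smul, hAk]
      calc ‖(A ^ (k+1)) ((B ^ j) T) + (c : ℂ) • (A ^ k) ((B ^ j) T)‖
          ≤ ‖(A ^ (k+1)) ((B ^ j) T)‖ + ‖(c : ℂ) • (A ^ k) ((B ^ j) T)‖ := norm_add_le _ _
        _ ≤ (M * (2 * c) ^ j) * c ^ (k+1) + c * ((M * (2 * c) ^ j) * c ^ k) := by
            gcongr
            · exact ih (k+1)
            · rw [norm_smul]
              simp only [Complex.norm_real, Real.norm_eq_abs, abs_of_pos hc]
              gcongr
              exact ih k
        _ = (M * (2 * c) ^ (j+1)) * c ^ k := by ring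
  -- step: B^(m+2) T = 0 → B^(m+1) T = 0
  have step : ∀ m : ℕ, (B ^ (m + 2)) T = 0 → (B ^ (m + 1)) T = 0 := by
    intro m hm
    have h2 : (B ^ 2) ((B ^ m) T) = 0 := by
      have : (B ^ 2) ((B ^ m) T) = (B ^ (m + 2)) T := by
        rw [show m + 2 = 2 + m by ring, pow_add]; rfl
      rw [this, hm]
    have hres := key_lemma A c hc ((B ^ m) T) (M * (2 * c) ^ m) (hgrow m) h2
    have : (B ^ (m + 1)) T = B ((B ^ m) T) := by rw [pow_succ']; rfl
    rw [this]
    exact hres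
  -- downward induction: ∀ m, B^(m+1) T = 0 → B^1 T = 0
  have down : ∀ m : ℕ, (B ^ (m + 1)) T = 0 → (B ^ 1) T = 0 := by
    intro m
    induction m with
    | zero => intro h; exact h
    | succ m ih => intro h; exact ih (step m h)
  have := down N hT
  simpa using this
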